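/- Let m : [t₀, T) → ℝ be locally Lipschitz and negative with m(t)² > K/ε for all t ∈ [t₀, T), where K > 0 and ε ∈ (0, 1/2), and suppose -K ≤ m'(t) + (1/2)m(t)² ≤ K a.e. Then 1/2 - ε ≤ -m'(t)/m(t)² ≤ 1/2 + ε a.e. on (t₀, T), and if moreover m(t) → -∞ as t → T, then integrating gives 1/(1/2 + ε) ≤ -m(t)(T - t) ≤ 1/(1/2 - ε) for all t ∈ (t₀, T). -/

import Mathlib

open Set MeasureTheory Filter Topology

/-- Fundamental theorem of calculus for Lipschitz functions on `ℝ`: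
the integral of the (a.e. defined) derivative recovers the increments. -/
private lemma lip_ftc {L : NNReal} {f : ℝ → ℝ} (hf : LipschitzWith L f) {a b : ℝ}
    (hab : a ≤ b) : ∫ u in a..b, deriv f u = f b - f a := by
  have hc : Continuous f := hf.continuous
  set F : ℝ → ℝ := fun x => ∫ u in (0:ℝ)..x, f u with hF
  have hFd : ∀ x : ℝ, HasDerivAt F (f x) x := fun x =>
    (hc.integral_hasStrictDerivAt 0 x).hasDerivAt
  set h : ℕ → ℝ := fun n => ((n : ℝ) + 1)⁻¹ with hh
  have hpos : ∀ n, 0 < h n := fun n => by positivity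
  have hne : ∀ n, h n ≠ 0 := fun n => (hpos n).ne'
  have hto : Tendsto h atTop (𝓝 0) := by
    have h1 : Tendsto (fun n : ℕ => ((n : ℝ) + 1)) atTop atTop :=
      tendsto_atTop_add_const_right _ 1 tendsto_natCast_atTop_atTop
    exact h1.inv_tendsto_atTop
  have haux : ∀ x : ℝ, Tendsto (fun n => x + h n) atTop (𝓝[≠] x) := by
    intro x
    have h1 : Tendsto (fun n => x + h n) atTop (𝓝 x) := by
      simpa using tendsto_const_nhds.add hto
    refine tendsto_nhdsWithin_iff.2 ⟨h1, Eventually.of_forall fun n => ?_⟩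
    simp [Set.mem_compl_singleton_iff, hne n]
  have hint : ∀ x y : ℝ, ∫ u in x..y, f u = F y - F x := by
    intro x y
    have := intervalIntegral.integral_add_adjacent_intervals
      (hc.intervalIntegrable (μ := volume) 0 x) (hc.intervalIntegrable (μ := volume) x y)
    rw [hF]
    linarith [this]
  have hcs : ∀ n, Continuous fun u : ℝ => f (u + h n) :=
    fun n => hc.comp (continuous_add_right (h n))
  have key : ∀ n, ∫ u in a..b, (f (u + h n) - f u) / h n
      = ((F (b + h n) - F b) - (F (a + h n) - F a)) / h n := by
    intro n
    have h1 : ∫ u in a..b, f (u + h n) = F (b + h n) - F (a + h n) := by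
      rw [intervalIntegral.integral_comp_add_right (fun u => f u) (h n), hint]
    have h2 : ∫ u in a..b, f u = F b - F a := hint a b
    have h3 : ∫ u in a..b, (f (u + h n) - f u)
        = (F (b + h n) - F (a + h n)) - (F b - F a) := by
      rw [intervalIntegral.integral_sub
        ((hcs n).intervalIntegrable a b) (hc.intervalIntegrable a b), h1, h2]
    calc ∫ u in a..b, (f (u + h n) - f u) / h n
        = (∫ u in a..b, (f (u + h n) - f u)) / h n := by
          rw [intervalIntegral.integral_div]
      _ = _ := by rw [h3]; ring
  have L1 : Tendsto (fun n => ∫ u in a..b, (f (u + h n) - f u) / h n) atTop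
      (𝓝 (∫ u in a..b, deriv f u)) := by
    simp_rw [intervalIntegral.integral_of_le hab]
    refine MeasureTheory.tendsto_integral_of_dominated_convergence (fun _ => (L : ℝ))
      (fun n => ?_) ?_ (fun n => ?_) ?_
    · exact (((hcs n).sub hc).div_const (h n)).aestronglyMeasurable.restrict
    · exact integrableOn_const measure_Ioc_lt_top.ne
    · refine Eventually.of_forall fun u => ?_
      rw [norm_div, Real.norm_eq_abs, Real.norm_eq_abs, abs_of_pos (hpos n),
        div_le_iff₀ (hpos n)]
      calc |f (u + h n) - f u| ≤ L * |(u + h n) - u| := by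
            simpa [Real.dist_eq] using hf.dist_le_mul (u + h n) u
        _ = L * h n := by rw [add_sub_cancel_left, abs_of_pos (hpos n)]
    · refine ae_restrict_of_ae ?_
      filter_upwards [hf.ae_differentiableAt] with u hu
      have hd := hu.hasDerivAt
      rw [hasDerivAt_iff_tendsto_slope] at hd
      exact (hd.comp (haux u)).congr fun n => by
        simp only [Function.comp_apply, slope_def_field, add_sub_cancel_left]
  have L2 : Tendsto (fun n => ((F (b + h n) - F b) - (F (a + h n) - F a)) / h n) atTop
      (𝓝 (f b - f a)) := by
    have Hb := hasDerivAt_iff_tendsto_slope.1 (hFd b)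
    have Ha := hasDerivAt_iff_tendsto_slope.1 (hFd a)
    have Tb : Tendsto (fun n => (F (b + h n) - F b) / h n) atTop (𝓝 (f b)) :=
      (Hb.comp (haux b)).congr fun n => by
        simp only [Function.comp_apply, slope_def_field, add_sub_cancel_left]
    have Ta : Tendsto (fun n => (F (a + h n) - F a) / h n) atTop (𝓝 (f a)) :=
      (Ha.comp (haux a)).congr fun n => by
        simp only [Function.comp_apply, slope_def_field, add_sub_cancel_left]
    exact (Tb.sub Ta).congr fun n => (sub_div _ _ _).symm
  exact tendsto_nhds_unique L1 (L2.congr fun n => (key n).symm)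

/-- If a Lipschitz function has derivative a.e. bounded between `c₁` and `c₂` on `Ioo a b`,
then its increment over `[a,b]` is between `c₁ * (b - a)` and `c₂ * (b - a)`. -/
private lemma lip_deriv_bound {L : NNReal} {f : ℝ → ℝ} (hf : LipschitzWith L f)
    {a b c₁ c₂ : ℝ} (hab : a ≤ b)
    (h : ∀ᵐ u ∂(volume : Measure ℝ), u ∈ Ioo a b → c₁ ≤ deriv f u ∧ deriv f u ≤ c₂) :
    c₁ * (b - a) ≤ f b - f a ∧ f b - f a ≤ c₂ * (b - a) := by
  have hderiv_bd : ∀ u, |deriv f u| ≤ L := by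
    intro u
    by_cases hd : DifferentiableAt ℝ f u
    · have h1 := hasDerivAt_iff_tendsto_slope.1 hd.hasDerivAt
      refine le_of_tendsto h1.abs (eventually_nhdsWithin_of_forall fun z hz => ?_)
      have hzu : z ≠ u := hz
      have hb : |f z - f u| ≤ L * |z - u| := by
        simpa [Real.dist_eq] using hf.dist_le_mul z u
      rw [slope_def_field, abs_div, div_le_iff₀ (abs_pos.2 (sub_ne_zero.2 hzu))]
      linarith [hb]
    · simp [deriv_zero_of_not_differentiableAt hd]
  have hint : IntervalIntegrable (deriv f) volume a b := by
    rw [intervalIntegrable_iff_integrableOn_Ioc_of_le hab]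
    refine Integrable.mono' (g := fun _ => (L:ℝ)) (integrableOn_const measure_Ioc_lt_top.ne)
      ((measurable_deriv f).aestronglyMeasurable.restrict)
      (Eventually.of_forall fun u => ?_)
    simpa [Real.norm_eq_abs] using hderiv_bd u
  have hna : ∀ᵐ u : ℝ ∂volume, u ≠ a := by
    rw [ae_iff]; simp [Set.setOf_eq_eq_singleton, measure_singleton]
  have hnb : ∀ᵐ u : ℝ ∂volume, u ≠ b := by
    rw [ae_iff]; simp [Set.setOf_eq_eq_singleton, measure_singleton]
  have hae1 : (fun _ => c₁) ≤ᵐ[volume.restrict (Icc a b)] deriv f := by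
    rw [Filter.EventuallyLE, ae_restrict_iff' measurableSet_Icc]
    filter_upwards [h, hna, hnb] with u hu hua hub huIcc
    exact (hu ⟨lt_of_le_of_ne huIcc.1 (Ne.symm hua), lt_of_le_of_ne huIcc.2 hub⟩).1
  have hae2 : deriv f ≤ᵐ[volume.restrict (Icc a b)] fun _ => c₂ := by
    rw [Filter.EventuallyLE, ae_restrict_iff' measurableSet_Icc]
    filter_upwards [h, hna, hnb] with u hu hua hub huIcc
    exact (hu ⟨lt_of_le_of_ne huIcc.1 (Ne.symm hua), lt_of_le_of_ne huIcc.2 hub⟩).2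
  constructor
  · calc c₁ * (b - a) = ∫ _ in a..b, c₁ := by
          rw [intervalIntegral.integral_const, smul_eq_mul, mul_comm]
      _ ≤ ∫ u in a..b, deriv f u :=
        intervalIntegral.integral_mono_ae_restrict hab intervalIntegrable_const hint hae1
      _ = f b - f a := lip_ftc hf hab
  · calc f b - f a = ∫ u in a..b, deriv f u := (lip_ftc hf hab).symm
      _ ≤ ∫ _ in a..b, c₂ :=
        intervalIntegral.integral_mono_ae_restrict hab hint intervalIntegrable_const hae2
      _ = c₂ * (b - a) := by
          rw [intervalIntegral.integral_const, smul_eq_mul, mul_comm]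

/-- Key step in the blow-up rate proof (Theorem 3.3): if `m` is locally Lipschitz and
negative on `[t₀,T)` with `m² > K/ε` there (`K > 0`, `0 < ε < 1/2`), and satisfies
`-K ≤ m' + ½m² ≤ K` a.e., then `½ - ε ≤ -m'/m² ≤ ½ + ε` a.e. on `(t₀,T)`; and if
moreover `m(t) → -∞` as `t → T⁻`, then
`1/(½+ε) ≤ -m(t)(T-t) ≤ 1/(½-ε)` on `(t₀,T)`. -/
theorem blowup_rate_key_step (t₀ T K ε : ℝ) (ht₀ : 0 ≤ t₀) (hT : t₀ < T) (hK : 0 < K)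
    (hε : ε ∈ Ioo (0:ℝ) (1/2)) (m : ℝ → ℝ)
    (hlip : ∀ t ∈ Ico t₀ T, ∃ L : NNReal, LipschitzOnWith L m (Icc t₀ t))
    (hneg : ∀ t ∈ Ico t₀ T, m t < 0)
    (hsq : ∀ t ∈ Ico t₀ T, K / ε < (m t) ^ 2)
    (hineq : ∀ᵐ t ∂(volume : Measure ℝ), t ∈ Ioo t₀ T →
      -K ≤ deriv m t + (1/2) * (m t) ^ 2 ∧ deriv m t + (1/2) * (m t) ^ 2 ≤ K) :
    (∀ᵐ t ∂(volume : Measure ℝ), t ∈ Ioo t₀ T →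
        1/2 - ε ≤ -(deriv m t) / (m t) ^ 2 ∧ -(deriv m t) / (m t) ^ 2 ≤ 1/2 + ε) ∧
      (Tendsto m (nhdsWithin T (Iio T)) atBot →
        ∀ t ∈ Ioo t₀ T,
          1 / (1/2 + ε) ≤ -(m t) * (T - t) ∧ -(m t) * (T - t) ≤ 1 / (1/2 - ε)) := by
  have hq : 0 < K / ε := div_pos hK hε.1
  constructor
  · -- a.e. bound on -m'/m²
    filter_upwards [hineq] with u hu humem
    obtain ⟨h1, h2⟩ := hu humem
    have hB : K / ε < (m u) ^ 2 := hsq u ⟨humem.1.le, humem.2⟩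
    have hBpos : 0 < (m u) ^ 2 := lt_trans hq hB
    have hKb : K < (m u) ^ 2 * ε := by rwa [div_lt_iff₀ hε.1] at hB
    constructor
    · rw [le_div_iff₀ hBpos]; nlinarith
    · rw [div_le_iff₀ hBpos]; nlinarith
  · -- integrated bound
    intro hblow t ht
    -- Step 1: for every s ∈ (t, T), the increment bound for -1/m
    have key : ∀ s ∈ Ioo t T,
        (1/2 - ε) * (s - t) ≤ (m s)⁻¹ - (m t)⁻¹ ∧
          (m s)⁻¹ - (m t)⁻¹ ≤ (1/2 + ε) * (s - t) := by
      intro s hs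
      obtain ⟨L, hL⟩ := hlip s ⟨le_trans ht.1.le hs.1.le, hs.2⟩
      have hmlt : ∀ u ∈ Icc t₀ s, m u < 0 ∧ K / ε < (m u) ^ 2 := by
        intro u hu
        have hu' : u ∈ Ico t₀ T := ⟨hu.1, lt_of_le_of_lt hu.2 hs.2⟩
        exact ⟨hneg u hu', hsq u hu'⟩
      -- g = -1/m is Lipschitz on Icc t₀ s
      have hglip : LipschitzOnWith (L * ⟨K / ε, hq.le⟩⁻¹) (fun u => -(m u)⁻¹) (Icc t₀ s) := by
        rw [lipschitzOnWith_iff_dist_le_mul]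
        intro x hx y hy
        obtain ⟨hx1, hx2⟩ := hmlt x hx
        obtain ⟨hy1, hy2⟩ := hmlt y hy
        have hxne : m x ≠ 0 := ne_of_lt hx1
        have hyne : m y ≠ 0 := ne_of_lt hy1
        have hP0 : 0 < m x * m y := mul_pos_of_neg_of_neg hx1 hy1
        have hsqsq : (K / ε) * (K / ε) < (m x) ^ 2 * (m y) ^ 2 :=
          mul_lt_mul'' hx2 hy2 hq.le hq.le
        have hprod : K / ε ≤ m x * m y := by nlinarith
        have hdist : dist (-(m x)⁻¹) (-(m y)⁻¹) = |m x - m y| / (m x * m y) := by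
          rw [Real.dist_eq, show -(m x)⁻¹ - -(m y)⁻¹ = (m x - m y) / (m x * m y) by
            field_simp; ring, abs_div, abs_of_pos hP0]
        have hdxy : |m x - m y| ≤ L * dist x y := by
          simpa [Real.dist_eq] using (lipschitzOnWith_iff_dist_le_mul.1 hL) x hx y hy
        have hcoe : ((L * ⟨K / ε, hq.le⟩⁻¹ : NNReal) : ℝ) = (L : ℝ) * (K / ε)⁻¹ := by
          rw [NNReal.coe_mul]; exact congrArg _ (NNReal.coe_inv _)
        rw [hdist, hcoe, div_le_iff₀ hP0]
        have h2 : (L : ℝ) * dist x y = (L : ℝ) * (K / ε)⁻¹ * dist x y * (K / ε) := by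
          rw [show (L : ℝ) * (K / ε)⁻¹ * dist x y * (K / ε)
              = (L : ℝ) * dist x y * ((K / ε) * (K / ε)⁻¹) by ring,
            mul_inv_cancel₀ hq.ne', mul_one]
        calc |m x - m y| ≤ (L : ℝ) * dist x y := hdxy
          _ = (L : ℝ) * (K / ε)⁻¹ * dist x y * (K / ε) := h2
          _ ≤ (L : ℝ) * (K / ε)⁻¹ * dist x y * (m x * m y) :=
              mul_le_mul_of_nonneg_left hprod (by positivity)
      obtain ⟨G, hGlip, hGeq⟩ := hglip.extend_real
      -- a.e. derivative bound for G on Ioo t s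
      have hderivG : ∀ᵐ u ∂(volume : Measure ℝ), u ∈ Ioo t s →
          -(1/2 + ε) ≤ deriv G u ∧ deriv G u ≤ -(1/2 - ε) := by
        have hdm : ∀ᵐ u ∂(volume : Measure ℝ), u ∈ Icc t₀ s →
            DifferentiableWithinAt ℝ m (Icc t₀ s) u :=
          (ae_restrict_iff' measurableSet_Icc).1 (hL.ae_differentiableWithinAt measurableSet_Icc)
        filter_upwards [hineq, hdm] with u hu1 hu2 huIoo
        have huI : u ∈ Ioo t₀ s := ⟨lt_trans ht.1 huIoo.1, huIoo.2⟩
        have hnbhd : Icc t₀ s ∈ 𝓝 u := Icc_mem_nhds huI.1 huI.2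
        have hdiff : DifferentiableAt ℝ m u :=
          (hu2 ⟨huI.1.le, huI.2.le⟩).differentiableAt hnbhd
        have humem : u ∈ Ioo t₀ T := ⟨huI.1, lt_trans huI.2 hs.2⟩
        obtain ⟨hA1, hA2⟩ := hu1 humem
        have hmu : m u < 0 := hneg u ⟨humem.1.le, humem.2⟩
        have hqu : K / ε < (m u) ^ 2 := hsq u ⟨humem.1.le, humem.2⟩
        have hGg : G =ᶠ[𝓝 u] fun x => -(m x)⁻¹ :=
          Filter.eventuallyEq_of_mem hnbhd fun x hx => (hGeq hx).symm
        have hgd : HasDerivAt (fun x => -(m x)⁻¹) (deriv m u / (m u) ^ 2) u := by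
          have := (hdiff.hasDerivAt.inv (ne_of_lt hmu)).neg
          rw [neg_div, neg_neg] at this; exact this
        have hGd : deriv G u = deriv m u / (m u) ^ 2 := by
          rw [Filter.EventuallyEq.deriv_eq hGg, hgd.deriv]
        rw [hGd]
        have hB : 0 < (m u) ^ 2 := lt_trans hq hqu
        have hKb : K < (m u) ^ 2 * ε := by rwa [div_lt_iff₀ hε.1] at hqu
        constructor
        · rw [le_div_iff₀ hB]; nlinarith
        · rw [div_le_iff₀ hB]; nlinarith
      have hts : t ≤ s := hs.1.le
      obtain ⟨hlow, hhigh⟩ := lip_deriv_bound hGlip hts hderivG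
      have hGt : G t = -(m t)⁻¹ := (hGeq ⟨ht.1.le, hts⟩).symm
      have hGs : G s = -(m s)⁻¹ := (hGeq ⟨le_trans ht.1.le hts, le_refl s⟩).symm
      rw [hGt, hGs] at hlow hhigh
      constructor <;> [linarith; linarith]
    -- Step 2: pass to the limit s → T⁻
    have htT : t < T := ht.2
    have hmem : Ioo t T ∈ 𝓝[<] T := Ioo_mem_nhdsLT_of_mem ⟨htT, le_refl T⟩
    have hinv0 : Tendsto (fun s => (m s)⁻¹) (𝓝[<] T) (𝓝 0) := by
      have h1 : Tendsto (fun s => -(m s)) (𝓝[<] T) atTop := tendsto_neg_atBot_atTop.comp hblow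
      have h2 : Tendsto (fun s => (-(m s))⁻¹) (𝓝[<] T) (𝓝 0) := h1.inv_tendsto_atTop
      have := h2.neg
      simpa using this.congr fun s => by rw [inv_neg, neg_neg]
    have hTt : Tendsto (fun s : ℝ => s - t) (𝓝[<] T) (𝓝 (T - t)) :=
      ((continuous_id.sub continuous_const).tendsto T).mono_left nhdsWithin_le_nhds
    have hlim1 : Tendsto (fun s => (1/2 - ε) * (s - t)) (𝓝[<] T) (𝓝 ((1/2 - ε) * (T - t))) :=
      hTt.const_mul _
    have hlim2 : Tendsto (fun s => (1/2 + ε) * (s - t)) (𝓝[<] T) (𝓝 ((1/2 + ε) * (T - t))) :=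
      hTt.const_mul _
    have hlim3 : Tendsto (fun s => (m s)⁻¹ - (m t)⁻¹) (𝓝[<] T) (𝓝 (0 - (m t)⁻¹)) :=
      hinv0.sub_const _
    have hI1 : (1/2 - ε) * (T - t) ≤ 0 - (m t)⁻¹ :=
      le_of_tendsto_of_tendsto hlim1 hlim3
        (eventually_of_mem hmem fun s hsmem => (key s hsmem).1)
    have hI2 : 0 - (m t)⁻¹ ≤ (1/2 + ε) * (T - t) :=
      le_of_tendsto_of_tendsto hlim3 hlim2
        (eventually_of_mem hmem fun s hsmem => (key s hsmem).2)
    -- Step 3: algebra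
    have hmt : m t < 0 := hneg t ⟨ht.1.le, ht.2⟩
    set y : ℝ := -(m t) with hy_def
    have hy : 0 < y := neg_pos.2 hmt
    have hyinv : y * y⁻¹ = 1 := mul_inv_cancel₀ hy.ne'
    have h1 : (1/2 - ε) * (T - t) ≤ y⁻¹ := by
      rw [hy_def, inv_neg]; linarith [hI1]
    have h2 : y⁻¹ ≤ (1/2 + ε) * (T - t) := by
      rw [hy_def, inv_neg]; linarith [hI2]
    have hTtpos : 0 < T - t := by linarith [ht.2]
    have hε1 : (0:ℝ) < 1/2 + ε := by linarith [hε.1]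
    have hε2 : (0:ℝ) < 1/2 - ε := by linarith [hε.2]
    constructor
    · rw [div_le_iff₀ hε1]
      nlinarith [mul_le_mul_of_nonneg_left h2 hy.le, hyinv]
    · rw [le_div_iff₀ hε2]
      nlinarith [mul_le_mul_of_nonneg_left h1 hy.le, hyinv]
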